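/- Let Q and P be finite idempotent-complete categories, suppose P has an initial object, and let A : Q ⥤ P be an open functor. Then every object of P is a retract of A.obj q for some q : Q (i.e. A is a surjection) if and only if the initial object of P lies in the essential image of A, i.e. there exists q : Q with A.obj q ≅ ⊥ (the initial object of P). -/

import Mathlib

open CategoryTheory CategoryTheory.Limits

universe u

/-- A retract datum: `a` is a retract of `b` via a section `i` and a retraction `r`.
(This matches Mathlib's `CategoryTheory.Retract`.) -/
structure Retract {C : Type*} [Category C] (a b : C) where
  /-- the section -/
  i : a ⟶ b
  /-- the retraction -/
  r : b ⟶ a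
  retract : i ≫ r = 𝟙 a

/-- A functor `A : I ⥤ J` is open if for every `x : I`, every `a : J` and every
`f : A.obj x ⟶ a`, there exist `y : I`, `u : x ⟶ y` and morphisms `s : a ⟶ A.obj y`,
`r : A.obj y ⟶ a` such that `s ≫ r = 𝟙 a` and `f ≫ s = A.map u`. -/
def IsOpenFunctor {I J : Type*} [Category I] [Category J] (A : I ⥤ J) : Prop :=
  ∀ (x : I) (a : J) (f : A.obj x ⟶ a),
    ∃ (y : I) (u : x ⟶ y) (s : a ⟶ A.obj y) (r : A.obj y ⟶ a),
      s ≫ r = 𝟙 a ∧ f ≫ s = A.map u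

/-- In a finite monoid, every element has an idempotent positive power. -/
lemma exists_idem_pow {M : Type*} [Monoid M] [Finite M] (v : M) :
    ∃ t, 1 ≤ t ∧ v ^ t * v ^ t = v ^ t := by
  obtain ⟨a, b, hab, h⟩ := Finite.exists_ne_map_eq_of_infinite (fun n : ℕ => v ^ n)
  wlog hlt : a < b generalizing a b
  · exact this b a hab.symm h.symm (by omega)
  set d := b - a with hd
  have hd1 : 1 ≤ d := by omega
  have step : ∀ n, a ≤ n → v ^ (n + d) = v ^ n := by
    intro n hn
    obtain ⟨m, rfl⟩ := Nat.exists_eq_add_of_le hn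
    have hb : a + d = b := by omega
    calc v ^ (a + m + d) = v ^ (a + d) * v ^ m := by rw [← pow_add]; ring_nf
    _ = v ^ a * v ^ m := by rw [hb, ← h]
    _ = v ^ (a + m) := by rw [← pow_add]
  have key : ∀ j n, a ≤ n → v ^ (n + j * d) = v ^ n := by
    intro j
    induction j with
    | zero => simp
    | succ j ih =>
      intro n hn
      have h1 : n + (j+1) * d = (n + j * d) + d := by ring
      rw [h1, step _ (by omega), ih n hn]
  refine ⟨(a+1) * d, Nat.one_le_iff_ne_zero.mpr (by positivity), ?_⟩
  rw [← pow_add]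
  exact key (a+1) ((a+1)*d) (by nlinarith)


/-- If `v : x ⟶ x` satisfies `A.map v = r ≫ initial.to _` (i.e. `A.map v` factors
through the initial object), then some object of the form `A.obj q` is isomorphic
to the initial object. -/
lemma retract_aux {Q P : Type u} [SmallCategory Q] [FinCategory Q] [IsIdempotentComplete Q]
    [SmallCategory P] [HasInitial P] (A : Q ⥤ P) (x : Q) (r : A.obj x ⟶ ⊥_ P)
    (v : x ⟶ x) (hv : A.map v = r ≫ initial.to (A.obj x)) :
    ∃ q : Q, Nonempty (A.obj q ≅ ⊥_ P) := by
  haveI : Finite (CategoryTheory.End x) := inferInstanceAs (Finite (x ⟶ x))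
  let vE : CategoryTheory.End x := v
  obtain ⟨t, ht1, hte⟩ := exists_idem_pow vE
  set e : x ⟶ x := vE ^ t with he
  have hee : e ≫ e = e := hte
  have claim : ∀ n, A.map ((vE ^ (n+1) : CategoryTheory.End x))
      = r ≫ initial.to (A.obj x) := by
    intro n
    induction n with
    | zero => rw [pow_one]; exact hv
    | succ n ih =>
      have h1 : vE ^ (n+1+1) = (vE ≫ (vE ^ (n+1)) : x ⟶ x) := pow_succ _ _
      rw [h1, Functor.map_comp]
      show A.map v ≫ A.map ((vE ^ (n+1) : CategoryTheory.End x)) = _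
      rw [hv, ih, Category.assoc]
      congr 1
      exact initial.hom_ext _ _
  have hAe : A.map e = r ≫ initial.to (A.obj x) := by
    have := claim (t - 1)
    rwa [Nat.sub_add_cancel ht1] at this
  obtain ⟨b, ib, eb, hib, heb⟩ := IsIdempotentComplete.idempotents_split x e hee
  have h3 : ib ≫ e ≫ eb = 𝟙 b := by
    rw [← heb]
    simp only [← Category.assoc]
    rw [hib, Category.id_comp, hib]
  refine ⟨b, ⟨{ hom := A.map ib ≫ r, inv := initial.to _,
                hom_inv_id := ?_, inv_hom_id := initial.hom_ext _ _ }⟩⟩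
  have h2 : initial.to (A.obj b) = initial.to (A.obj x) ≫ A.map eb :=
    initial.hom_ext _ _
  rw [h2, Category.assoc]
  slice_lhs 2 3 => rw [← hAe]
  rw [← Functor.map_comp, ← Functor.map_comp]
  rw [h3]
  exact A.map_id b

theorem stmt_13 (Q P : Type u) [SmallCategory Q] [FinCategory Q] [IsIdempotentComplete Q]
    [SmallCategory P] [FinCategory P] [IsIdempotentComplete P] [HasInitial P]
    (A : Q ⥤ P) (hA : IsOpenFunctor A) :
    (∀ a : P, ∃ q : Q, Nonempty (_root_.Retract a (A.obj q))) ↔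
      ∃ q : Q, Nonempty (A.obj q ≅ ⊥_ P) := by
  constructor
  · intro h
    obtain ⟨q0, ⟨R0⟩⟩ := h (⊥_ P)
    have step : ∀ (x : Q) (r : A.obj x ⟶ ⊥_ P), ∃ (y : Q) (u : x ⟶ y)
        (r' : A.obj y ⟶ ⊥_ P), r ≫ initial.to (A.obj y) = A.map u := by
      intro x r
      obtain ⟨y, u, s, r', -, hu⟩ := hA x (⊥_ P) r
      have hs : s = initial.to (A.obj y) := initial.hom_ext _ _
      exact ⟨y, u, r', by rw [← hs, hu]⟩
    choose Y U R hUR using step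
    let seq : ℕ → Σ x : Q, (A.obj x ⟶ ⊥_ P) := fun n =>
      Nat.rec ⟨q0, R0.r⟩ (fun _ p => ⟨Y p.1 p.2, R p.1 p.2⟩) n
    have comp : ∀ (k n : ℕ), ∃ w : (seq n).1 ⟶ (seq (n+k+1)).1,
        A.map w = (seq n).2 ≫ initial.to (A.obj (seq (n+k+1)).1) := by
      intro k
      induction k with
      | zero => exact fun n => ⟨U (seq n).1 (seq n).2, (hUR (seq n).1 (seq n).2).symm⟩
      | succ k ih =>
        intro n
        obtain ⟨w, hw⟩ := ih n
        refine ⟨w ≫ U (seq (n+k+1)).1 (seq (n+k+1)).2, ?_⟩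
        rw [Functor.map_comp, hw, Category.assoc]
        congr 1
        exact initial.hom_ext _ _
    obtain ⟨i, j, hij, hobj⟩ : ∃ i j, i < j ∧ (seq i).1 = (seq j).1 := by
      obtain ⟨a, b, hab, h1⟩ := Finite.exists_ne_map_eq_of_infinite (fun n => (seq n).1)
      rcases Nat.lt_or_ge a b with hc | hc
      · exact ⟨a, b, hc, h1⟩
      · exact ⟨b, a, by omega, h1.symm⟩
    obtain ⟨w, hw⟩ := comp (j - i - 1) i
    have hj : i + (j - i - 1) + 1 = j := by omega
    rw [← hj] at hobj
    refine retract_aux A (seq i).1 (seq i).2 (w ≫ eqToHom hobj.symm) ?_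
    rw [Functor.map_comp, hw, Category.assoc]
    congr 1
    exact initial.hom_ext _ _
  · rintro ⟨q, ⟨iso⟩⟩ a
    obtain ⟨y, u, s, r, hsr, -⟩ := hA q a (iso.hom ≫ initial.to a)
    exact ⟨y, ⟨⟨s, r, hsr⟩⟩⟩
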